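/- arXiv:2312.16889 — 6 statements merged into one kernel-verified Lean document; each statement's English description precedes it below -/
import Mathlib

section
/- Fix an integer n ≥ 2 and a real number R₁ > 0, and let f₁(r) = r − R₁ⁿ/r^{n−1}. Define F : [R₁,∞) → ℝ by F(r) = (f₁'(r))² + ((n−1)/r²)·f₁(r)². Then F(r) = n·(1 + (n−1)·(R₁/r)^{2n}) for all r ≥ R₁, and F is a strictly decreasing function on [R₁,∞). -/
lemma f1_hasDeriv (m : ℕ) (R₁ : ℝ) (r : ℝ) (hr : r ≠ 0) :
    HasDerivAt (fun r : ℝ => r - R₁ ^ (m + 2) / r ^ (m + 1))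
      (1 + ((m : ℝ) + 1) * R₁ ^ (m + 2) / r ^ (m + 2)) r := by
  have h1 : HasDerivAt (fun r : ℝ => r ^ (m + 1)) (((m : ℝ) + 1) * r ^ m) r := by
    simpa using hasDerivAt_pow (m + 1) r
  have h2 := (h1.inv (pow_ne_zero _ hr)).const_mul (R₁ ^ (m + 2))
  have h3 := (hasDerivAt_id r).sub h2
  have h4 : HasDerivAt (fun r : ℝ => r - R₁ ^ (m + 2) / r ^ (m + 1))
      (1 - R₁ ^ (m + 2) * (-(((m : ℝ) + 1) * r ^ m) * ((r ^ (m + 1)) ^ 2)⁻¹)) r := by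
    have h3' : HasDerivAt (fun y : ℝ => y - R₁ ^ (m + 2) / y ^ (m + 1))
        (1 - R₁ ^ (m + 2) * (-((↑m + 1) * r ^ m) / (r ^ (m + 1)) ^ 2)) r := h3
    exact h3'.congr_deriv (by ring)
  convert h4 using 1
  field_simp
  ring

/-- For `f₁(r) = r − R₁ⁿ/r^{n−1}`, the function
`F(r) = f₁'(r)² + ((n−1)/r²) f₁(r)²` equals `n (1 + (n−1)(R₁/r)^{2n})` on `[R₁,∞)`
and is strictly decreasing there. -/
theorem F_formula_and_strictAnti (n : ℕ) (hn : 2 ≤ n) (R₁ : ℝ) (hR₁ : 0 < R₁)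
    (f₁ F : ℝ → ℝ)
    (hf₁ : ∀ r : ℝ, f₁ r = r - R₁ ^ n / r ^ (n - 1))
    (hF : ∀ r : ℝ, F r = (deriv f₁ r) ^ 2 + ((n : ℝ) - 1) / r ^ 2 * (f₁ r) ^ 2) :
    (∀ r : ℝ, R₁ ≤ r → F r = n * (1 + ((n : ℝ) - 1) * (R₁ / r) ^ (2 * n))) ∧
    StrictAntiOn F (Set.Ici R₁) := by
  obtain ⟨m, rfl⟩ : ∃ m, n = m + 2 := ⟨n - 2, by omega⟩
  have hformula : ∀ r : ℝ, R₁ ≤ r →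
      F r = (m + 2 : ℕ) * (1 + (((m + 2 : ℕ) : ℝ) - 1) * (R₁ / r) ^ (2 * (m + 2))) := by
    intro r hr
    have hr0 : 0 < r := lt_of_lt_of_le hR₁ hr
    have hrne : r ≠ 0 := ne_of_gt hr0
    have hfun : f₁ = fun r : ℝ => r - R₁ ^ (m + 2) / r ^ (m + 1) := by
      funext x; simpa using hf₁ x
    have hderiv : deriv f₁ r = 1 + ((m : ℝ) + 1) * R₁ ^ (m + 2) / r ^ (m + 2) := by
      rw [hfun]; exact (f1_hasDeriv m R₁ r hrne).deriv
    rw [hF, hderiv, hf₁]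
    push_cast
    rw [div_pow]
    field_simp
    ring
  refine ⟨hformula, ?_⟩
  intro a ha b hb hab
  simp only [Set.mem_Ici] at ha hb
  rw [hformula a ha, hformula b hb]
  have ha0 : 0 < a := lt_of_lt_of_le hR₁ ha
  have hb0 : 0 < b := lt_of_lt_of_le hR₁ hb
  have hlt : R₁ / b < R₁ / a := by
    apply div_lt_div_of_pos_left hR₁ ha0 hab
  have hpow : (R₁ / b) ^ (2 * (m + 2)) < (R₁ / a) ^ (2 * (m + 2)) :=
    pow_lt_pow_left₀ hlt (le_of_lt (div_pos hR₁ hb0)) (by omega)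
  have hcoef : (0 : ℝ) < ((m + 2 : ℕ) : ℝ) - 1 := by push_cast; linarith
  have hn0 : (0 : ℝ) < ((m + 2 : ℕ) : ℝ) := by positivity
  nlinarith [mul_lt_mul_of_pos_left hpow (mul_pos hn0 hcoef)]
end

section
/- Fix an integer n ≥ 2, a real number R₁ > 0, and let f₁(r) = r − R₁ⁿ/r^{n−1}. Let Ω ⊆ ℝⁿ\{0} be a bounded measurable set that is invariant under the rotation by angle π/2 in every coordinate plane (xᵢ,xⱼ), i ≠ j. Define uᵢ(x) = f₁(‖x‖)·xᵢ/‖x‖ and u₀(x) = f₁(‖x‖). Then for every index i ∈ {1,…,n}, ∫_Ω ⟨∇u₀(x), ∇uᵢ(x)⟩ dV = 0. -/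
open MeasureTheory RealInnerProductSpace

/-- The rotation by angle `π/2` in the `(xᵢ, xⱼ)`-coordinate plane of `ℝⁿ`:
it sends `xᵢ ↦ −xⱼ`, `xⱼ ↦ xᵢ` and fixes all the other coordinates. -/
def planeRotation (n : ℕ) (i j : Fin n)
    (x : EuclideanSpace ℝ (Fin n)) : EuclideanSpace ℝ (Fin n) :=
  WithLp.toLp 2 (fun k => if k = i then -(x j) else if k = j then x i else x k)

section aux

variable {E : Type*} [NormedAddCommGroup E] [InnerProductSpace ℝ E] [CompleteSpace E]

lemma gradient_comp_lie (e : E ≃ₗᵢ[ℝ] E) (f : E → ℝ) (x : E) :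
    gradient (fun y => f (e y)) x = e.symm (gradient f (e x)) := by
  by_cases h : DifferentiableAt ℝ f (e x)
  · apply ext_inner_right ℝ
    intro v
    have hde : DifferentiableAt ℝ (⇑e) x :=
      e.toContinuousLinearEquiv.differentiableAt
    have hfe : fderiv ℝ (⇑e) x = (e.toContinuousLinearEquiv : E →L[ℝ] E) :=
      e.toContinuousLinearEquiv.fderiv
    have hcomp : fderiv ℝ (fun y => f (e y)) x
        = (fderiv ℝ f (e x)).comp (fderiv ℝ (⇑e) x) := fderiv_comp x h hde
    have h1 : ⟪gradient (fun y => f (e y)) x, v⟫ = fderiv ℝ (fun y => f (e y)) x v := by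
      simp [gradient, InnerProductSpace.toDual_symm_apply]
    have h2 : ⟪e.symm (gradient f (e x)), v⟫ = fderiv ℝ f (e x) (e v) := by
      rw [← e.inner_map_map, e.apply_symm_apply]
      simp [gradient, InnerProductSpace.toDual_symm_apply]
    rw [h1, h2, hcomp, hfe]
    rfl
  · have h' : ¬ DifferentiableAt ℝ (fun y => f (e y)) x := by
      intro hc
      apply h
      have h2 : DifferentiableAt ℝ ((fun y => f (e y)) ∘ ⇑e.symm) (e x) :=
        DifferentiableAt.comp _ (by simpa using hc)
          e.symm.toContinuousLinearEquiv.differentiableAt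
      have h3 : ((fun y => f (e y)) ∘ ⇑e.symm) = f := by
        funext z; simp
      rwa [h3] at h2
    rw [gradient_eq_zero_of_not_differentiableAt h,
      gradient_eq_zero_of_not_differentiableAt h', map_zero]

lemma gradient_neg' (f : E → ℝ) (x : E) :
    gradient (fun y => -f y) x = -gradient f x := by
  simp [gradient, fderiv_neg, map_neg]

end aux

/-- Negation of the `i`-th and `j`-th coordinates, as a linear isometry equivalence. -/
noncomputable def negPair (n : ℕ) (i j : Fin n) :
    EuclideanSpace ℝ (Fin n) ≃ₗᵢ[ℝ] EuclideanSpace ℝ (Fin n) :=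
  LinearIsometryEquiv.piLpCongrRight 2
    (fun k => if k = i ∨ k = j then LinearIsometryEquiv.neg ℝ else .refl ℝ ℝ)

lemma negPair_apply (n : ℕ) (i j : Fin n) (x : EuclideanSpace ℝ (Fin n)) (k : Fin n) :
    negPair n i j x k = if k = i ∨ k = j then -(x k) else x k := by
  rw [negPair, LinearIsometryEquiv.piLpCongrRight_apply]
  by_cases h : k = i ∨ k = j <;> simp [h]

lemma negPair_eq_rot_sq (n : ℕ) (i j : Fin n) (hij : j ≠ i) (x : EuclideanSpace ℝ (Fin n)) :
    negPair n i j x = planeRotation n i j (planeRotation n i j x) := by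
  ext k
  rw [negPair_apply]
  by_cases hki : k = i
  · subst hki
    simp [planeRotation, hij]
  · by_cases hkj : k = j
    · subst hkj
      simp [planeRotation, hij, hki]
    · simp [planeRotation, hki, hkj]

/-- For `f₁(r) = r − R₁ⁿ/r^{n−1}`, `u₀(x) = f₁(‖x‖)`, `uᵢ(x) = f₁(‖x‖) xᵢ/‖x‖`, and a
bounded measurable set `Ω ⊆ ℝⁿ \ {0}` invariant under the rotation by `π/2` in every
coordinate plane, we have `∫_Ω ⟨∇u₀, ∇uᵢ⟩ dV = 0` for every `i`. -/
theorem integral_inner_gradient_radial_with_test_function_eq_zero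
    (n : ℕ) (hn : 2 ≤ n) (R₁ : ℝ) (hR₁ : 0 < R₁)
    (f₁ : ℝ → ℝ) (hf₁ : ∀ r : ℝ, f₁ r = r - R₁ ^ n / r ^ (n - 1))
    (Ω : Set (EuclideanSpace ℝ (Fin n))) (hΩ : MeasurableSet Ω)
    (hΩ0 : (0 : EuclideanSpace ℝ (Fin n)) ∉ Ω) (hΩb : Bornology.IsBounded Ω)
    (hinv : ∀ i j : Fin n, i ≠ j → planeRotation n i j '' Ω = Ω)
    (u₀ : EuclideanSpace ℝ (Fin n) → ℝ)
    (hu₀ : ∀ x : EuclideanSpace ℝ (Fin n), u₀ x = f₁ ‖x‖)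
    (u : Fin n → EuclideanSpace ℝ (Fin n) → ℝ)
    (hu : ∀ (i : Fin n) (x : EuclideanSpace ℝ (Fin n)), u i x = f₁ ‖x‖ * x i / ‖x‖)
    (i : Fin n) :
    ∫ x in Ω, ⟪gradient u₀ x, gradient (u i) x⟫ = 0 := by
  have : Nontrivial (Fin n) := Fin.nontrivial_iff_two_le.mpr hn
  obtain ⟨j, hj⟩ := exists_ne i
  set e := negPair n i j with he
  -- e preserves Ω
  have himg : e '' Ω = Ω := by
    have : ⇑e = planeRotation n i j ∘ planeRotation n i j := by
      funext x; exact negPair_eq_rot_sq n i j hj x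
    rw [this, Set.image_comp, hinv i j (Ne.symm hj), hinv i j (Ne.symm hj)]
  -- u₀ ∘ e = u₀
  have hu₀e : (fun y => u₀ (e y)) = u₀ := by
    funext y
    rw [hu₀, hu₀, e.norm_map]
  -- u i ∘ e = -(u i)
  have huie : (fun y => u i (e y)) = (fun y => -(u i y)) := by
    funext y
    rw [hu, hu, e.norm_map]
    have : e y i = -(y i) := by rw [he, negPair_apply]; simp
    rw [this]
    ring
  -- pointwise antisymmetry of the integrand
  have key : ∀ x, ⟪gradient u₀ (e x), gradient (u i) (e x)⟫
      = -⟪gradient u₀ x, gradient (u i) x⟫ := by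
    intro x
    have h0 : gradient u₀ x = e.symm (gradient u₀ (e x)) := by
      conv_lhs => rw [← hu₀e]
      exact gradient_comp_lie e u₀ x
    have h1 : -gradient (u i) x = e.symm (gradient (u i) (e x)) := by
      rw [← gradient_neg' (u i) x, ← huie]
      exact gradient_comp_lie e (u i) x
    calc ⟪gradient u₀ (e x), gradient (u i) (e x)⟫
        = ⟪e.symm (gradient u₀ (e x)), e.symm (gradient (u i) (e x))⟫ :=
          (e.symm.inner_map_map _ _).symm
      _ = ⟪gradient u₀ x, -gradient (u i) x⟫ := by rw [← h0, ← h1]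
      _ = -⟪gradient u₀ x, gradient (u i) x⟫ := by rw [inner_neg_right]
  -- change of variables
  have hmp : MeasurePreserving (⇑e) volume volume := e.measurePreserving
  have hemb : MeasurableEmbedding (⇑e) := e.toHomeomorph.measurableEmbedding
  have hcov : ∫ x in Ω, ⟪gradient u₀ x, gradient (u i) x⟫
      = ∫ x in Ω, ⟪gradient u₀ (e x), gradient (u i) (e x)⟫ := by
    conv_lhs => rw [← himg]
    exact hmp.setIntegral_image_emb hemb _ Ω
  have : ∫ x in Ω, ⟪gradient u₀ x, gradient (u i) x⟫
      = -∫ x in Ω, ⟪gradient u₀ x, gradient (u i) x⟫ := by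
    conv_lhs => rw [hcov]
    simp_rw [key]
    exact integral_neg fun x => ⟪gradient u₀ x, gradient (u i) x⟫
  linarith
end

section
/- Fix an integer n ≥ 2, a real number R₁ > 0, and let f₁(r) = r − R₁ⁿ/r^{n−1}. Let Ω ⊆ ℝⁿ\{0} be a bounded measurable set that is invariant under the rotation by angle π/2 in every coordinate plane (xᵢ,xⱼ), i ≠ j. Define uᵢ(x) = f₁(‖x‖)·xᵢ/‖x‖. Then for all indices i ≠ j in {1,…,n}, ∫_Ω ⟨∇uᵢ(x), ∇uⱼ(x)⟩ dV = 0. -/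
open MeasureTheory RealInnerProductSpace

/-- The plane rotation as a linear isometry equivalence. -/
noncomputable def rotEquiv (n : ℕ) (i j : Fin n) (hij : i ≠ j) :
    EuclideanSpace ℝ (Fin n) ≃ₗᵢ[ℝ] EuclideanSpace ℝ (Fin n) where
  toFun := planeRotation n i j
  invFun := planeRotation n j i
  map_add' x y := by
    ext k
    simp only [planeRotation, PiLp.add_apply, PiLp.toLp_apply]
    split_ifs <;> ring
  map_smul' c x := by
    ext k
    simp only [planeRotation, PiLp.smul_apply, PiLp.toLp_apply, RingHom.id_apply, smul_eq_mul]
    split_ifs <;> ring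
  left_inv x := by
    ext k
    simp only [planeRotation]
    rcases eq_or_ne k i with rfl | hki
    · simp [hij, hij.symm]
    · rcases eq_or_ne k j with rfl | hkj
      · simp [hij, hij.symm]
      · simp [hki, hkj]
  right_inv x := by
    ext k
    simp only [planeRotation]
    rcases eq_or_ne k i with rfl | hki
    · simp [hij, hij.symm]
    · rcases eq_or_ne k j with rfl | hkj
      · simp [hij, hij.symm]
      · simp [hki, hkj]
  norm_map' x := by
    rw [EuclideanSpace.norm_eq, EuclideanSpace.norm_eq]
    congr 1
    refine (Fintype.sum_equiv (Equiv.swap i j) _ _ fun k => ?_).symm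
    rcases eq_or_ne k i with rfl | hki
    · simp [planeRotation, Equiv.swap_apply_left, hij.symm]
    · rcases eq_or_ne k j with rfl | hkj
      · simp [planeRotation, Equiv.swap_apply_right, hij]
      · rw [Equiv.swap_apply_of_ne_of_ne hki hkj]
        simp [planeRotation, hki, hkj]

lemma gradient_comp_isometry {E : Type*} [NormedAddCommGroup E] [InnerProductSpace ℝ E]
    [CompleteSpace E] (e : E ≃ₗᵢ[ℝ] E) (f : E → ℝ) (x : E) :
    gradient (fun y => f (e y)) x = e.symm (gradient f (e x)) := by
  by_cases hd : DifferentiableAt ℝ f (e x)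
  · have he : HasFDerivAt (fun y => f (e y))
        ((InnerProductSpace.toDual ℝ E (gradient f (e x))).comp
          (e.toContinuousLinearEquiv : E →L[ℝ] E)) x :=
      (hd.hasGradientAt.hasFDerivAt).comp x
        (e.toContinuousLinearEquiv : E →L[ℝ] E).hasFDerivAt
    have : HasGradientAt (fun y => f (e y)) (e.symm (gradient f (e x))) x := by
      rw [hasGradientAt_iff_hasFDerivAt]
      refine he.congr_fderiv ?_
      ext v
      simp only [InnerProductSpace.toDual_apply_apply, ContinuousLinearMap.coe_comp',
        Function.comp_apply, ContinuousLinearEquiv.coe_coe,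
        LinearIsometryEquiv.coe_toContinuousLinearEquiv]
      rw [← e.inner_map_map (e.symm (gradient f (e x))) v, e.apply_symm_apply]
    exact this.gradient
  · have hd2 : ¬ DifferentiableAt ℝ (fun y => f (e y)) x := by
      intro h
      apply hd
      have h' : DifferentiableAt ℝ (fun y => f (e y)) (e.symm (e x)) := by
        rwa [e.symm_apply_apply]
      have hcomp := DifferentiableAt.comp (𝕜 := ℝ) (e x) h'
        (e.symm.toContinuousLinearEquiv : E →L[ℝ] E).differentiableAt
      exact hcomp.congr_of_eventuallyEq
        (Filter.Eventually.of_forall fun z => by simp)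
    rw [gradient_eq_zero_of_not_differentiableAt hd,
      gradient_eq_zero_of_not_differentiableAt hd2, map_zero]

lemma gradient_neg_fun {E : Type*} [NormedAddCommGroup E] [InnerProductSpace ℝ E]
    [CompleteSpace E] (f : E → ℝ) (x : E) :
    gradient (fun y => -(f y)) x = - gradient f x := by
  simp [gradient, fderiv_neg]

/-- For `f₁(r) = r − R₁ⁿ/r^{n−1}`, `uᵢ(x) = f₁(‖x‖) xᵢ/‖x‖`, and a bounded measurable
set `Ω ⊆ ℝⁿ \ {0}` invariant under the rotation by `π/2` in every coordinate plane,
we have `∫_Ω ⟨∇uᵢ, ∇uⱼ⟩ dV = 0` for all `i ≠ j`. -/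
theorem integral_inner_gradient_test_functions_eq_zero
    (n : ℕ) (hn : 2 ≤ n) (R₁ : ℝ) (hR₁ : 0 < R₁)
    (f₁ : ℝ → ℝ) (hf₁ : ∀ r : ℝ, f₁ r = r - R₁ ^ n / r ^ (n - 1))
    (Ω : Set (EuclideanSpace ℝ (Fin n))) (hΩ : MeasurableSet Ω)
    (hΩ0 : (0 : EuclideanSpace ℝ (Fin n)) ∉ Ω) (hΩb : Bornology.IsBounded Ω)
    (hinv : ∀ i j : Fin n, i ≠ j → planeRotation n i j '' Ω = Ω)
    (u : Fin n → EuclideanSpace ℝ (Fin n) → ℝ)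
    (hu : ∀ (i : Fin n) (x : EuclideanSpace ℝ (Fin n)), u i x = f₁ ‖x‖ * x i / ‖x‖)
    (i j : Fin n) (hij : i ≠ j) :
    ∫ x in Ω, ⟪gradient (u i) x, gradient (u j) x⟫ = 0 := by
  set e := rotEquiv n i j hij with he
  have hecoe : ∀ x, e x = planeRotation n i j x := fun x => rfl
  -- coordinates of e x
  have hei : ∀ x : EuclideanSpace ℝ (Fin n), (e x) i = -(x j) := by
    intro x; simp [hecoe, planeRotation]
  have hej : ∀ x : EuclideanSpace ℝ (Fin n), (e x) j = x i := by
    intro x; simp [hecoe, planeRotation, hij.symm]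
  -- u i ∘ e = - u j, u j ∘ e = u i
  have hui : (fun y => u i (e y)) = fun y => -(u j y) := by
    funext y
    rw [hu, hu, e.norm_map, hei]
    ring
  have huj : (fun y => u j (e y)) = u i := by
    funext y
    rw [hu, hu, e.norm_map, hej]
  -- the integrand is anti-symmetric under e
  have hanti : ∀ x, ⟪gradient (u i) (e x), gradient (u j) (e x)⟫
      = -⟪gradient (u i) x, gradient (u j) x⟫ := by
    intro x
    have h1 : gradient (u i) (e x) = e (gradient (fun y => u i (e y)) x) := by
      rw [gradient_comp_isometry e (u i) x, e.apply_symm_apply]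
    have h2 : gradient (u j) (e x) = e (gradient (fun y => u j (e y)) x) := by
      rw [gradient_comp_isometry e (u j) x, e.apply_symm_apply]
    rw [h1, h2, e.inner_map_map, hui, huj, gradient_neg_fun, inner_neg_left,
      real_inner_comm]
  -- change of variables
  have hmp : MeasurePreserving e volume volume := e.measurePreserving
  have hemb : MeasurableEmbedding e := e.toHomeomorph.measurableEmbedding
  have hpre : e ⁻¹' Ω = Ω := by
    conv_lhs => rw [← hinv i j hij]
    have : planeRotation n i j '' Ω = e '' Ω := rfl
    rw [this, Set.preimage_image_eq Ω e.injective]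
  have key : ∫ x in Ω, ⟪gradient (u i) x, gradient (u j) x⟫
      = ∫ x in Ω, ⟪gradient (u i) (e x), gradient (u j) (e x)⟫ := by
    rw [← hmp.setIntegral_preimage_emb hemb
      (fun x => ⟪gradient (u i) x, gradient (u j) x⟫) Ω, hpre]
  have : ∫ x in Ω, ⟪gradient (u i) x, gradient (u j) x⟫
      = - ∫ x in Ω, ⟪gradient (u i) x, gradient (u j) x⟫ := by
    conv_lhs => rw [key]
    have h4 : (fun x => (⟪gradient (u i) (e x), gradient (u j) (e x)⟫ : ℝ))
        = fun x => -⟪gradient (u i) x, gradient (u j) x⟫ := funext hanti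
    rw [show (∫ x in Ω, ⟪gradient (u i) (e x), gradient (u j) (e x)⟫)
        = ∫ x in Ω, -⟪gradient (u i) x, gradient (u j) x⟫ from by rw [h4],
      integral_neg]
  linarith
end

section
/- Fix an integer n ≥ 2 and real numbers 0 < R₁ < R₂. Let f₁(r) = r − R₁ⁿ/r^{n−1} and F(r) = (f₁'(r))² + ((n−1)/r²)·f₁(r)². Let Ω₀ = B_{R₂} \ closure(B_{R₁}) be the open annulus in ℝⁿ centered at the origin, and let Ω ⊆ ℝⁿ be a measurable set disjoint from the closed ball of radius R₁ centered at the origin, with Lebesgue measure Vol(Ω) = Vol(Ω₀). Then ∫_Ω F(‖x‖) dV ≤ ∫_{Ω₀} F(‖x‖) dV. -/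
open MeasureTheory

/-- For `f₁(r) = r − R₁ⁿ/r^{n−1}` and `F(r) = f₁'(r)² + ((n−1)/r²) f₁(r)²`, if
`Ω₀ = B_{R₂} \ closure(B_{R₁})` is the concentric annulus and `Ω` is a measurable set
disjoint from `closedBall 0 R₁` with the same volume as `Ω₀`, then
`∫_Ω F(‖x‖) dV ≤ ∫_{Ω₀} F(‖x‖) dV`. -/
theorem integral_F_le_integral_F_annulus
    (n : ℕ) (hn : 2 ≤ n) (R₁ R₂ : ℝ) (hR₁ : 0 < R₁) (hR₁R₂ : R₁ < R₂)
    (f₁ F : ℝ → ℝ)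
    (hf₁ : ∀ r : ℝ, f₁ r = r - R₁ ^ n / r ^ (n - 1))
    (hF : ∀ r : ℝ, F r = (deriv f₁ r) ^ 2 + ((n : ℝ) - 1) / r ^ 2 * (f₁ r) ^ 2)
    (Ω : Set (EuclideanSpace ℝ (Fin n))) (hΩ : MeasurableSet Ω)
    (hdisj : Disjoint Ω (Metric.closedBall (0 : EuclideanSpace ℝ (Fin n)) R₁))
    (hvol : volume Ω =
      volume (Metric.ball (0 : EuclideanSpace ℝ (Fin n)) R₂ \
        Metric.closedBall (0 : EuclideanSpace ℝ (Fin n)) R₁)) :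
    ∫ x in Ω, F ‖x‖ ≤
      ∫ x in Metric.ball (0 : EuclideanSpace ℝ (Fin n)) R₂ \
        Metric.closedBall (0 : EuclideanSpace ℝ (Fin n)) R₁, F ‖x‖ := by
  obtain ⟨m, rfl⟩ : ∃ m, n = m + 2 := ⟨n - 2, by omega⟩
  set Ω₀ : Set (EuclideanSpace ℝ (Fin (m + 2))) :=
    Metric.ball 0 R₂ \ Metric.closedBall 0 R₁ with hΩ₀def
  have hf₁fun : f₁ = fun r : ℝ => r - R₁ ^ (m + 2) / r ^ (m + 1) := by
    funext r; simpa using hf₁ r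
  -- derivative formula
  have hderiv : ∀ r : ℝ, 0 < r →
      deriv f₁ r = 1 + ((m : ℝ) + 1) * R₁ ^ (m + 2) / r ^ (m + 2) := by
    intro r hr
    have hr' : r ≠ 0 := hr.ne'
    have h1 : HasDerivAt (fun s : ℝ => R₁ ^ (m + 2) / s ^ (m + 1))
        ((0 * r ^ (m + 1) - R₁ ^ (m + 2) * (((m + 1 : ℕ) : ℝ) * r ^ (m + 1 - 1)))
          / (r ^ (m + 1)) ^ 2) r :=
      (hasDerivAt_const r _).div (hasDerivAt_pow (m + 1) r) (pow_ne_zero _ hr')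
    have h2 : HasDerivAt f₁
        (1 - (0 * r ^ (m + 1) - R₁ ^ (m + 2) * (((m + 1 : ℕ) : ℝ) * r ^ (m + 1 - 1)))
          / (r ^ (m + 1)) ^ 2) r := by
      rw [hf₁fun]
      exact (hasDerivAt_id r).sub h1
    rw [h2.deriv, Nat.add_sub_cancel]
    push_cast
    field_simp
    ring
  -- closed formula for F
  have hFval : ∀ r : ℝ, 0 < r → F r =
      ((m : ℝ) + 2) + ((m : ℝ) + 2) * ((m : ℝ) + 1) * (R₁ ^ (m + 2) / r ^ (m + 2)) ^ 2 := by
    intro r hr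
    have hr' : r ≠ 0 := hr.ne'
    rw [hF, hderiv r hr, hf₁fun]
    have hc : ((m + 2 : ℕ) : ℝ) - 1 = (m : ℝ) + 1 := by push_cast; ring
    rw [hc]
    have h1 : r ^ (m + 1) * r = r ^ (m + 2) := by rw [← pow_succ]
    field_simp
    ring_nf
  have hFnn : ∀ r : ℝ, 0 < r → 0 ≤ F r := by
    intro r hr; rw [hFval r hr]; positivity
  -- antitonicity on [R₁, ∞)
  have hmono : ∀ s t : ℝ, R₁ ≤ s → s ≤ t → F t ≤ F s := by
    intro s t hs hst
    have hs0 : 0 < s := hR₁.trans_le hs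
    have ht0 : 0 < t := hs0.trans_le hst
    rw [hFval s hs0, hFval t ht0]
    gcongr
  -- measurability of x ↦ F ‖x‖
  have hf₁meas : Measurable f₁ := by
    rw [hf₁fun]
    exact measurable_id.sub (measurable_const.div (measurable_id.pow_const _))
  have hFmeas : Measurable F := by
    have hFfun : F = fun r : ℝ => (deriv f₁ r) ^ 2 +
        (((m + 2 : ℕ) : ℝ) - 1) / r ^ 2 * (f₁ r) ^ 2 := funext hF
    rw [hFfun]
    exact ((measurable_deriv f₁).pow_const 2).add
      ((measurable_const.div (measurable_id.pow_const 2)).mul (hf₁meas.pow_const 2))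
  have hmeasfun : Measurable fun x : EuclideanSpace ℝ (Fin (m + 2)) => F ‖x‖ :=
    hFmeas.comp measurable_norm
  -- norms on the sets
  have hΩnorm : ∀ x ∈ Ω, R₁ < ‖x‖ := by
    intro x hx
    by_contra h
    exact Set.disjoint_left.mp hdisj hx (mem_closedBall_zero_iff.mpr (not_lt.mp h))
  have hΩ₀norm : ∀ x ∈ Ω₀, R₁ < ‖x‖ ∧ ‖x‖ < R₂ := by
    intro x hx
    obtain ⟨h1, h2⟩ := hx
    exact ⟨not_le.mp fun h => h2 (mem_closedBall_zero_iff.mpr h), mem_ball_zero_iff.mp h1⟩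
  have hΩ₀meas : MeasurableSet Ω₀ := measurableSet_ball.diff measurableSet_closedBall
  have hΩ₀fin : volume Ω₀ < ⊤ :=
    lt_of_le_of_lt (measure_mono Set.diff_subset) measure_ball_lt_top
  have hΩfin : volume Ω < ⊤ := by rw [hvol]; exact hΩ₀fin
  -- integrability
  have hintΩ : IntegrableOn (fun x => F ‖x‖) Ω := by
    refine Integrable.mono'
      ((integrableOn_const_iff).mpr (Or.inr hΩfin) :
        IntegrableOn (fun _ => F R₁) Ω volume)
      hmeasfun.aestronglyMeasurable ?_
    rw [ae_restrict_iff' hΩ]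
    filter_upwards with x hx
    have h1 : R₁ < ‖x‖ := hΩnorm x hx
    rw [Real.norm_eq_abs, abs_of_nonneg (hFnn _ (hR₁.trans h1))]
    exact hmono R₁ ‖x‖ le_rfl h1.le
  have hintΩ₀ : IntegrableOn (fun x => F ‖x‖) Ω₀ := by
    refine Integrable.mono'
      ((integrableOn_const_iff).mpr (Or.inr hΩ₀fin) :
        IntegrableOn (fun _ => F R₁) Ω₀ volume)
      hmeasfun.aestronglyMeasurable ?_
    rw [ae_restrict_iff' hΩ₀meas]
    filter_upwards with x hx
    have h1 : R₁ < ‖x‖ := (hΩ₀norm x hx).1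
    rw [Real.norm_eq_abs, abs_of_nonneg (hFnn _ (hR₁.trans h1))]
    exact hmono R₁ ‖x‖ le_rfl h1.le
  -- measure of symmetric pieces
  have h1 : volume (Ω ∩ Ω₀) + volume (Ω \ Ω₀) = volume Ω :=
    measure_inter_add_diff Ω hΩ₀meas
  have h2 : volume (Ω₀ ∩ Ω) + volume (Ω₀ \ Ω) = volume Ω₀ :=
    measure_inter_add_diff Ω₀ hΩ
  have hfin : volume (Ω ∩ Ω₀) ≠ ⊤ :=
    (lt_of_le_of_lt (measure_mono Set.inter_subset_left) hΩfin).ne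
  have hAB : volume (Ω \ Ω₀) = volume (Ω₀ \ Ω) := by
    have h3 : volume (Ω ∩ Ω₀) + volume (Ω \ Ω₀)
        = volume (Ω ∩ Ω₀) + volume (Ω₀ \ Ω) := by
      rw [h1, hvol, ← h2, Set.inter_comm]
    exact (ENNReal.add_right_inj hfin).mp h3
  -- split integrals
  have e1 : (∫ x in Ω ∩ Ω₀, F ‖x‖) + ∫ x in Ω \ Ω₀, F ‖x‖ = ∫ x in Ω, F ‖x‖ :=
    integral_inter_add_diff hΩ₀meas hintΩ
  have e2 : (∫ x in Ω₀ ∩ Ω, F ‖x‖) + ∫ x in Ω₀ \ Ω, F ‖x‖ = ∫ x in Ω₀, F ‖x‖ :=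
    integral_inter_add_diff hΩ hintΩ₀
  rw [← e1, ← e2, Set.inter_comm Ω₀ Ω]
  refine add_le_add_right ?_ _
  have hA : ∀ x ∈ Ω \ Ω₀, R₂ ≤ ‖x‖ := by
    intro x hx
    obtain ⟨hxΩ, hxnot⟩ := hx
    by_contra h
    exact hxnot ⟨mem_ball_zero_iff.mpr (not_le.mp h),
      fun hc => absurd (mem_closedBall_zero_iff.mp hc) (not_le.mpr (hΩnorm x hxΩ))⟩
  calc ∫ x in Ω \ Ω₀, F ‖x‖
      ≤ ∫ _x in Ω \ Ω₀, F R₂ := by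
        refine setIntegral_mono_on (hintΩ.mono_set Set.diff_subset)
          ((integrableOn_const_iff).mpr (Or.inr
            (lt_of_le_of_lt (measure_mono Set.diff_subset) hΩfin)))
          (hΩ.diff hΩ₀meas) ?_
        intro x hx
        exact hmono R₂ ‖x‖ hR₁R₂.le (hA x hx)
    _ = (volume (Ω \ Ω₀)).toReal * F R₂ := by rw [setIntegral_const, smul_eq_mul, measureReal_def]
    _ = (volume (Ω₀ \ Ω)).toReal * F R₂ := by rw [hAB]
    _ = ∫ _x in Ω₀ \ Ω, F R₂ := by rw [setIntegral_const, smul_eq_mul, measureReal_def]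
    _ ≤ ∫ x in Ω₀ \ Ω, F ‖x‖ := by
        refine setIntegral_mono_on
          ((integrableOn_const_iff).mpr (Or.inr
            (lt_of_le_of_lt (measure_mono Set.diff_subset) hΩ₀fin)))
          (hintΩ₀.mono_set Set.diff_subset)
          (hΩ₀meas.diff hΩ) ?_
        intro x hx
        obtain ⟨h1, h2⟩ := hΩ₀norm x hx.1
        exact hmono ‖x‖ R₂ h1.le h2.le
end

section
/- Fix an integer n ≥ 2 and real numbers 0 < R₁ < R₂. Let f₁(r) = r − R₁ⁿ/r^{n−1} and G(r) = 2·f₁(r)·f₁'(r) + ((n−1)/r)·f₁(r)². Let Ω₀ = B_{R₂} \ closure(B_{R₁}) be the open annulus in ℝⁿ centered at the origin, and let Ω ⊆ ℝⁿ be a bounded measurable set disjoint from the closed ball of radius R₁ centered at the origin, with Lebesgue measure Vol(Ω) = Vol(Ω₀). Then ∫_Ω G(‖x‖) dV ≥ ∫_{Ω₀} G(‖x‖) dV. -/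
open MeasureTheory

/-- For `f₁(r) = r − R₁ⁿ/r^{n−1}` and `G(r) = 2 f₁(r) f₁'(r) + ((n−1)/r) f₁(r)²`, if
`Ω₀ = B_{R₂} \ closure(B_{R₁})` is the concentric annulus and `Ω` is a bounded
measurable set disjoint from `closedBall 0 R₁` with the same volume as `Ω₀`, then
`∫_Ω G(‖x‖) dV ≥ ∫_{Ω₀} G(‖x‖) dV`. -/
theorem integral_G_ge_integral_G_annulus
    (n : ℕ) (hn : 2 ≤ n) (R₁ R₂ : ℝ) (hR₁ : 0 < R₁) (hR₁R₂ : R₁ < R₂)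
    (f₁ G : ℝ → ℝ)
    (hf₁ : ∀ r : ℝ, f₁ r = r - R₁ ^ n / r ^ (n - 1))
    (hG : ∀ r : ℝ, G r = 2 * f₁ r * deriv f₁ r + ((n : ℝ) - 1) / r * (f₁ r) ^ 2)
    (Ω : Set (EuclideanSpace ℝ (Fin n))) (hΩ : MeasurableSet Ω)
    (hbd : Bornology.IsBounded Ω)
    (hdisj : Disjoint Ω (Metric.closedBall (0 : EuclideanSpace ℝ (Fin n)) R₁))
    (hvol : volume Ω =
      volume (Metric.ball (0 : EuclideanSpace ℝ (Fin n)) R₂ \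
        Metric.closedBall (0 : EuclideanSpace ℝ (Fin n)) R₁)) :
    ∫ x in Metric.ball (0 : EuclideanSpace ℝ (Fin n)) R₂ \
        Metric.closedBall (0 : EuclideanSpace ℝ (Fin n)) R₁, G ‖x‖ ≤
      ∫ x in Ω, G ‖x‖ := by
  obtain ⟨m, rfl⟩ : ∃ m, n = m + 2 := ⟨n - 2, by omega⟩
  set c := R₁ ^ (m + 2) with hcdef
  have hcpos : 0 < c := pow_pos hR₁ _
  have hf₁' : f₁ = fun r => r - c / r ^ (m + 1) := by
    funext r; rw [hf₁]; norm_num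
  -- derivative of f₁ away from 0
  have hderiv : ∀ r : ℝ, r ≠ 0 →
      deriv f₁ r = 1 + ((m : ℝ) + 1) * c / r ^ (m + 2) := by
    intro r hr
    have h1 : HasDerivAt f₁
        (1 - (0 * r ^ (m + 1) - c * (((m + 1 : ℕ) : ℝ) * r ^ (m + 1 - 1))) /
          (r ^ (m + 1)) ^ 2) r := by
      rw [hf₁']
      exact (hasDerivAt_id r).sub
        ((hasDerivAt_const r c).div (hasDerivAt_pow (m + 1) r) (pow_ne_zero _ hr))
    rw [h1.deriv]
    simp only [Nat.add_sub_cancel, Nat.cast_add, Nat.cast_one]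
    have hrp : r ^ (m + 1) ≠ 0 := pow_ne_zero _ hr
    field_simp
    ring
  -- explicit formula for G on positive reals
  set Gexp : ℝ → ℝ :=
    fun r => ((m : ℝ) + 3) * r - 2 * c / r ^ (m + 1) - ((m : ℝ) + 1) * c ^ 2 / r ^ (2 * m + 3)
    with hGexp
  have hGpos : ∀ r : ℝ, 0 < r → G r = Gexp r := by
    intro r hr
    have hr0 : r ≠ 0 := ne_of_gt hr
    rw [hG, hderiv r hr0, hf₁ r]
    simp only [hGexp]
    have h1 : r ^ (m + 1) ≠ 0 := pow_ne_zero _ hr0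
    have h2 : r ^ (m + 2) ≠ 0 := pow_ne_zero _ hr0
    have h3 : r ^ (2 * m + 3) ≠ 0 := pow_ne_zero _ hr0
    have hnn : ((m + 2 : ℕ) : ℝ) - 1 = (m : ℝ) + 1 := by push_cast; ring
    rw [show (m + 2) - 1 = m + 1 from rfl, hnn]
    field_simp
    ring
  -- monotonicity of G on (0, ∞)
  have hmono : ∀ r s : ℝ, 0 < r → r ≤ s → G r ≤ G s := by
    intro r s hr hrs
    have hs : 0 < s := lt_of_lt_of_le hr hrs
    rw [hGpos r hr, hGpos s hs]
    simp only [hGexp]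
    have h1 : r ^ (m + 1) ≤ s ^ (m + 1) := pow_le_pow_left₀ hr.le hrs _
    have h2 : r ^ (2 * m + 3) ≤ s ^ (2 * m + 3) := pow_le_pow_left₀ hr.le hrs _
    gcongr <;> positivity
  -- basic set notation
  set Ω₀ : Set (EuclideanSpace ℝ (Fin (m + 2))) :=
    Metric.ball (0 : EuclideanSpace ℝ (Fin (m + 2))) R₂ \
      Metric.closedBall (0 : EuclideanSpace ℝ (Fin (m + 2))) R₁ with hΩ₀def
  have hΩ₀meas : MeasurableSet Ω₀ :=
    measurableSet_ball.diff measurableSet_closedBall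
  have hΩnorm : ∀ x ∈ Ω, R₁ < ‖x‖ := by
    intro x hx
    by_contra h
    push_neg at h
    exact (hdisj.ne_of_mem hx (by simpa [Metric.mem_closedBall, dist_zero_right] using h)) rfl
  have hΩ₀norm : ∀ x ∈ Ω₀, R₁ < ‖x‖ ∧ ‖x‖ < R₂ := by
    intro x hx
    obtain ⟨h1, h2⟩ := hx
    rw [Metric.mem_ball, dist_zero_right] at h1
    rw [Metric.mem_closedBall, dist_zero_right] at h2
    exact ⟨lt_of_not_ge h2, h1⟩
  -- continuity of Gexp ∘ norm away from 0
  have hGexpCont : ContinuousOn (fun x : EuclideanSpace ℝ (Fin (m + 2)) => Gexp ‖x‖)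
      {x : EuclideanSpace ℝ (Fin (m + 2)) | x ≠ 0} := by
    have h1 : ContinuousOn Gexp {r : ℝ | r ≠ 0} := by
      apply ContinuousOn.sub
      apply ContinuousOn.sub
      · fun_prop
      · exact continuousOn_const.div (continuousOn_pow _) fun r hr => pow_ne_zero _ hr
      · exact continuousOn_const.div (continuousOn_pow _) fun r hr => pow_ne_zero _ hr
    exact h1.comp continuous_norm.continuousOn fun x hx => by
      simpa [norm_ne_zero_iff] using hx
  -- integrability lemma
  have hIntOn : ∀ S : Set (EuclideanSpace ℝ (Fin (m + 2))), MeasurableSet S →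
      (∀ x ∈ S, R₁ < ‖x‖) → Bornology.IsBounded S → IntegrableOn (fun x => G ‖x‖) S := by
    intro S hSm hSn hSb
    obtain ⟨M, hM⟩ := hSb.subset_closedBall 0
    set K : Set (EuclideanSpace ℝ (Fin (m + 2))) :=
      Metric.closedBall 0 M \ Metric.ball 0 R₁ with hK
    have hKcomp : IsCompact K := (isCompact_closedBall _ _).diff Metric.isOpen_ball
    have hKint : IntegrableOn (fun x : EuclideanSpace ℝ (Fin (m + 2)) => Gexp ‖x‖) K :=
      (hGexpCont.mono fun x hx => by
        simp only [Set.mem_setOf_eq]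
        intro h0
        have := hx.2
        simp [h0, hR₁] at this).integrableOn_compact hKcomp
    have hSK : S ⊆ K := fun x hx =>
      ⟨hM hx, by simp [Metric.mem_ball, dist_zero_right, not_lt, (hSn x hx).le]⟩
    exact ((hKint.mono_set hSK).congr_fun
      (fun x hx => (hGpos ‖x‖ (lt_trans hR₁ (hSn x hx))).symm) hSm)
  have hΩ₀bd : Bornology.IsBounded Ω₀ :=
    (Metric.isBounded_ball).subset Set.diff_subset
  have hintΩ : IntegrableOn (fun x => G ‖x‖) Ω :=
    hIntOn Ω hΩ (fun x hx => hΩnorm x hx) hbd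
  have hintΩ₀ : IntegrableOn (fun x => G ‖x‖) Ω₀ :=
    hIntOn Ω₀ hΩ₀meas (fun x hx => (hΩ₀norm x hx).1) hΩ₀bd
  -- split the sets
  have hsplitΩ : (∫ x in Ω ∩ Ω₀, G ‖x‖) + ∫ x in Ω \ Ω₀, G ‖x‖ = ∫ x in Ω, G ‖x‖ :=
    integral_inter_add_diff hΩ₀meas hintΩ
  have hsplitΩ₀ : (∫ x in Ω₀ ∩ Ω, G ‖x‖) + ∫ x in Ω₀ \ Ω, G ‖x‖ = ∫ x in Ω₀, G ‖x‖ :=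
    integral_inter_add_diff hΩ hintΩ₀
  -- equal measures of the difference sets
  have hfinΩ₀ : volume Ω₀ ≠ ⊤ := hΩ₀bd.measure_lt_top.ne
  have hfinΩ : volume Ω ≠ ⊤ := hbd.measure_lt_top.ne
  have hfinA : volume (Ω ∩ Ω₀) ≠ ⊤ :=
    ((measure_mono Set.inter_subset_left).trans_lt hfinΩ.lt_top).ne
  have hfinB : volume (Ω \ Ω₀) ≠ ⊤ :=
    ((measure_mono Set.diff_subset).trans_lt hfinΩ.lt_top).ne
  have hfinC : volume (Ω₀ \ Ω) ≠ ⊤ :=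
    ((measure_mono Set.diff_subset).trans_lt hfinΩ₀.lt_top).ne
  have hmeq : volume (Ω \ Ω₀) = volume (Ω₀ \ Ω) := by
    have h1 : volume (Ω ∩ Ω₀) + volume (Ω \ Ω₀) = volume Ω :=
      measure_inter_add_diff Ω hΩ₀meas
    have h2 : volume (Ω₀ ∩ Ω) + volume (Ω₀ \ Ω) = volume Ω₀ :=
      measure_inter_add_diff Ω₀ hΩ
    rw [Set.inter_comm] at h2
    have h3 : volume (Ω ∩ Ω₀) + volume (Ω \ Ω₀) = volume (Ω ∩ Ω₀) + volume (Ω₀ \ Ω) := by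
      rw [h1, h2, hvol]
    exact (ENNReal.add_right_inj hfinA).mp h3
  -- lower bound on Ω \ Ω₀
  have hBnorm : ∀ x ∈ Ω \ Ω₀, R₂ ≤ ‖x‖ := by
    intro x hx
    obtain ⟨hx1, hx2⟩ := hx
    by_contra h
    push_neg at h
    refine hx2 ⟨by rwa [Metric.mem_ball, dist_zero_right], ?_⟩
    simp only [Metric.mem_closedBall, dist_zero_right]
    exact not_le.mpr (hΩnorm x hx1)
  have hlow : (volume (Ω \ Ω₀)).toReal • G R₂ ≤ ∫ x in Ω \ Ω₀, G ‖x‖ := by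
    rw [← measureReal_def, ← setIntegral_const]
    refine setIntegral_mono_on (integrableOn_const hfinB)
      (hintΩ.mono_set Set.diff_subset) (hΩ.diff hΩ₀meas) fun x hx =>
      hmono R₂ ‖x‖ (hR₁.trans hR₁R₂) (hBnorm x hx)
  have hupp : ∫ x in Ω₀ \ Ω, G ‖x‖ ≤ (volume (Ω₀ \ Ω)).toReal • G R₂ := by
    rw [← measureReal_def, ← setIntegral_const]
    refine setIntegral_mono_on (hintΩ₀.mono_set Set.diff_subset)
      (integrableOn_const hfinC) (hΩ₀meas.diff hΩ) fun x hx => ?_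
    obtain ⟨h1, h2⟩ := hΩ₀norm x hx.1
    exact hmono ‖x‖ R₂ (hR₁.trans h1) h2.le
  -- combine
  rw [← hsplitΩ, ← hsplitΩ₀, Set.inter_comm Ω₀ Ω]
  have h9 : (volume (Ω₀ \ Ω)).toReal • G R₂ ≤ ∫ x in Ω \ Ω₀, G ‖x‖ := by
    rwa [← hmeq]
  exact add_le_add_right (hupp.trans h9) _
end

section
/- Fix an integer n ≥ 2 and real numbers 0 < R₁ < R₂. Let f₁(r) = r − R₁ⁿ/r^{n−1} and F(r) = (f₁'(r))² + ((n−1)/r²)·f₁(r)². Then ∫_{R₁}^{R₂} F(r)·r^{n−1} dr = ((R₂ⁿ + (n−1)·R₁ⁿ) / (R₂^{n+1} − R₂·R₁ⁿ)) · f₁(R₂)² · R₂^{n−1}. -/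
/-- For `f₁(r) = r − R₁ⁿ/r^{n−1}` and `F(r) = f₁'(r)² + ((n−1)/r²) f₁(r)²`, one has
`∫_{R₁}^{R₂} F(r) r^{n−1} dr
  = ((R₂ⁿ + (n−1) R₁ⁿ)/(R₂^{n+1} − R₂ R₁ⁿ)) f₁(R₂)² R₂^{n−1}`,
identifying the Rayleigh quotient of the test functions on the annulus with the
second Steklov–Dirichlet eigenvalue. -/
theorem integral_F_rpow (n : ℕ) (hn : 2 ≤ n) (R₁ R₂ : ℝ) (hR₁ : 0 < R₁)
    (hR₁R₂ : R₁ < R₂) (f₁ F : ℝ → ℝ)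
    (hf₁ : ∀ r : ℝ, f₁ r = r - R₁ ^ n / r ^ (n - 1))
    (hF : ∀ r : ℝ, F r = (deriv f₁ r) ^ 2 + ((n : ℝ) - 1) / r ^ 2 * (f₁ r) ^ 2) :
    ∫ r in R₁..R₂, F r * r ^ (n - 1) =
      (R₂ ^ n + ((n : ℝ) - 1) * R₁ ^ n) / (R₂ ^ (n + 1) - R₂ * R₁ ^ n)
        * (f₁ R₂) ^ 2 * R₂ ^ (n - 1) := by
  obtain ⟨m, rfl⟩ : ∃ m, n = m + 2 := ⟨n - 2, by omega⟩
  have hf₁e : f₁ = fun r => r - R₁ ^ (m + 2) / r ^ (m + 1) := funext (by simpa using hf₁)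
  subst hf₁e
  set a : ℝ := R₁ ^ (m + 2) with ha
  have ha0 : 0 < a := pow_pos hR₁ _
  -- derivative of f₁ at r ≠ 0
  have hderiv : ∀ r : ℝ, r ≠ 0 →
      HasDerivAt (fun r : ℝ => r - a / r ^ (m + 1))
        (1 + ((m : ℝ) + 1) * a / r ^ (m + 2)) r := by
    intro r hr
    have hrp : r ^ (m + 1) ≠ 0 := pow_ne_zero _ hr
    have h1 : HasDerivAt (fun r : ℝ => r ^ (m + 1)) (((m : ℝ) + 1) * r ^ m) r := by
      simpa using hasDerivAt_pow (m + 1) r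
    have h2 : HasDerivAt (fun r : ℝ => a / r ^ (m + 1))
        (a * (-(((m : ℝ) + 1) * r ^ m) / (r ^ (m + 1)) ^ 2)) r := by
      simpa [div_eq_mul_inv] using (h1.inv hrp).const_mul a
    have h3 := (hasDerivAt_id r).sub h2
    refine h3.congr_deriv ?_
    field_simp
    ring
  have hderiv' : ∀ r : ℝ, r ≠ 0 →
      deriv (fun r : ℝ => r - a / r ^ (m + 1)) r
        = 1 + ((m : ℝ) + 1) * a / r ^ (m + 2) := fun r hr => (hderiv r hr).deriv
  -- explicit integrand
  set E : ℝ → ℝ := fun r =>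
    ((1 + ((m : ℝ) + 1) * a / r ^ (m + 2)) ^ 2
      + ((m : ℝ) + 1) / r ^ 2 * (r - a / r ^ (m + 1)) ^ 2) * r ^ (m + 1) with hE
  -- antiderivative
  set g : ℝ → ℝ := fun r => (r - a / r ^ (m + 1)) * (r ^ (m + 1) + ((m : ℝ) + 1) * a / r)
    with hg
  have hpos : ∀ r ∈ Set.uIcc R₁ R₂, (0 : ℝ) < r := by
    intro r hr
    rw [Set.uIcc_of_le hR₁R₂.le] at hr
    exact lt_of_lt_of_le hR₁ hr.1
  have hgderiv : ∀ r ∈ Set.uIcc R₁ R₂, HasDerivAt g (E r) r := by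
    intro r hr
    have hr0 : r ≠ 0 := (hpos r hr).ne'
    have hrp : r ^ (m + 1) ≠ 0 := pow_ne_zero _ hr0
    have h1 := hderiv r hr0
    have h2 : HasDerivAt (fun r : ℝ => r ^ (m + 1) + ((m : ℝ) + 1) * a / r)
        (((m : ℝ) + 1) * r ^ m + (((m : ℝ) + 1) * a) * (-1 / r ^ 2)) r := by
      have hp : HasDerivAt (fun r : ℝ => r ^ (m + 1)) (((m : ℝ) + 1) * r ^ m) r := by
        simpa using hasDerivAt_pow (m + 1) r
      have hi : HasDerivAt (fun r : ℝ => (((m : ℝ) + 1) * a) / r)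
          ((((m : ℝ) + 1) * a) * (-1 / r ^ 2)) r := by
        simpa [div_eq_mul_inv, one_div] using (hasDerivAt_id r).inv hr0 |>.const_mul
          (((m : ℝ) + 1) * a)
      exact hp.add hi
    have h3 := h1.mul h2
    refine h3.congr_deriv ?_
    rw [hE]
    field_simp
    ring
  have hEcont : ContinuousOn E (Set.uIcc R₁ R₂) := by
    apply ContinuousOn.mul _ (continuousOn_pow _)
    apply ContinuousOn.add
    · apply ContinuousOn.pow
      apply ContinuousOn.add continuousOn_const
      exact ContinuousOn.div continuousOn_const (continuousOn_pow _)
        (fun r hr => pow_ne_zero _ (hpos r hr).ne')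
    · apply ContinuousOn.mul
      · exact ContinuousOn.div continuousOn_const (continuousOn_pow _)
          (fun r hr => pow_ne_zero _ (hpos r hr).ne')
      · apply ContinuousOn.pow
        exact ContinuousOn.sub (continuousOn_id) (ContinuousOn.div continuousOn_const
          (continuousOn_pow _) (fun r hr => pow_ne_zero _ (hpos r hr).ne'))
  have hint : ∫ r in R₁..R₂, E r = g R₂ - g R₁ :=
    intervalIntegral.integral_eq_sub_of_hasDerivAt hgderiv
      (hEcont.intervalIntegrable)
  have hcongr : ∫ r in R₁..R₂, F r * r ^ (m + 2 - 1) = ∫ r in R₁..R₂, E r := by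
    apply intervalIntegral.integral_congr
    intro r hr
    have hr0 : r ≠ 0 := (hpos r hr).ne'
    show F r * r ^ (m + 2 - 1) = E r
    rw [hF r, hderiv' r hr0, hE]
    push_cast
    ring
  rw [hcongr, hint]
  have hR₂0 : R₂ ≠ 0 := (hR₁.trans hR₁R₂).ne'
  have hR₂p : R₂ ^ (m + 1) ≠ 0 := pow_ne_zero _ hR₂0
  have hR₁p : R₁ ^ (m + 1) ≠ 0 := pow_ne_zero _ hR₁.ne'
  have hgR₁ : g R₁ = 0 := by
    rw [hg]
    simp only
    have : R₁ - a / R₁ ^ (m + 1) = 0 := by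
      rw [ha]; field_simp; ring
    rw [this, zero_mul]
  rw [hgR₁, sub_zero]
  have hden : R₂ ^ (m + 2 + 1) - R₂ * R₁ ^ (m + 2) ≠ 0 := by
    have : R₁ ^ (m + 2) < R₂ ^ (m + 2) := by
      exact pow_lt_pow_left₀ hR₁R₂ hR₁.le (by omega)
    have h2 : R₂ * R₁ ^ (m + 2) < R₂ * R₂ ^ (m + 2) :=
      (mul_lt_mul_iff_right₀ (hR₁.trans hR₁R₂)).2 this
    have : R₂ * R₁ ^ (m + 2) < R₂ ^ (m + 2 + 1) := by
      calc R₂ * R₁ ^ (m + 2) < R₂ * R₂ ^ (m + 2) := h2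
        _ = R₂ ^ (m + 2 + 1) := by ring
    linarith
  rw [hg]
  simp only
  push_cast
  rw [ha] at *
  field_simp
  ring
end
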